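/- For ρ > 0, k ≥ 2 and z ∈ ℝ², the convolution of ⟨·⟩^{-ρ} with the uniform probability measure δ_k on the circle of radius k satisfies (⟨·⟩^{-ρ} * δ_k)(z) = (1/2π)∫₀^{2π} ((k cosθ − |z|)² + k² sin²θ + 1)^{-ρ/2} dθ ≤ ∫₀¹ (k²t² + 1)^{-ρ/2} dt, where ⟨x⟩ = (1+|x|²)^{1/2}. Consequently sup_z (⟨·⟩^{-ρ} * δ_k)(z) = O(k^{-ρ}) for ρ ∈ (0,1), O(k^{-1}ln k) for ρ = 1, and O(k^{-1}) for ρ > 1, as k → ∞. -/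

import Mathlib

open MeasureTheory Real intervalIntegral Filter

/-- The convolution of `⟨·⟩^{-ρ}` with the uniform probability measure `δ_k` on the
circle of radius `k` in `ℝ²`. -/
noncomputable def japConv (ρ k : ℝ) (z : ℝ × ℝ) : ℝ :=
  (1 / (2 * Real.pi)) * ∫ θ in (0:ℝ)..(2 * Real.pi),
    (1 + (z.1 - k * Real.cos θ) ^ 2 + (z.2 - k * Real.sin θ) ^ 2) ^ (-ρ / 2)

lemma cont_aux {f : ℝ → ℝ} (hf : Continuous f) (hpos : ∀ x, 0 < f x) (c : ℝ) :
    Continuous fun x => f x ^ c :=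
  hf.rpow_const fun x => Or.inl (hpos x).ne'

lemma ring_int_le (ρ : ℝ) (hρ : 0 < ρ) (k r : ℝ) :
    (∫ θ in (0:ℝ)..(2 * Real.pi),
        ((k * Real.cos θ - r) ^ 2 + k ^ 2 * Real.sin θ ^ 2 + 1) ^ (-ρ / 2))
      ≤ 2 * Real.pi * ∫ t in (0:ℝ)..1, (k ^ 2 * t ^ 2 + 1) ^ (-ρ / 2) := by
  have hexp : -ρ / 2 ≤ 0 := by linarith
  set H : ℝ → ℝ := fun θ => (k ^ 2 * Real.sin θ ^ 2 + 1) ^ (-ρ / 2) with hH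
  have hHpos : ∀ x : ℝ, (0:ℝ) < k ^ 2 * Real.sin x ^ 2 + 1 := fun x => by positivity
  have hHcont : Continuous H :=
    cont_aux (by continuity) hHpos _
  have hFcont : Continuous fun θ =>
      ((k * Real.cos θ - r) ^ 2 + k ^ 2 * Real.sin θ ^ 2 + 1) ^ (-ρ / 2) :=
    cont_aux (by continuity) (fun x => by positivity) _
  have hGcont : Continuous fun θ : ℝ => (k ^ 2 * (2 / Real.pi * θ) ^ 2 + 1) ^ (-ρ / 2) :=
    cont_aux (by continuity) (fun x => by positivity) _
  -- step 1
  have step1 : (∫ θ in (0:ℝ)..(2 * Real.pi),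
        ((k * Real.cos θ - r) ^ 2 + k ^ 2 * Real.sin θ ^ 2 + 1) ^ (-ρ / 2))
      ≤ ∫ θ in (0:ℝ)..(2 * Real.pi), H θ := by
    refine intervalIntegral.integral_mono_on (by positivity)
      (hFcont.intervalIntegrable _ _) (hHcont.intervalIntegrable _ _) fun x _ => ?_
    exact Real.rpow_le_rpow_of_nonpos (hHpos x) (by nlinarith [sq_nonneg (k * Real.cos x - r)])
      hexp
  -- step 2 : periodicity π
  have hperH : Function.Periodic H Real.pi := by
    intro x; simp [hH, Real.sin_add_pi]
  have step2 : (∫ θ in (0:ℝ)..(2 * Real.pi), H θ) = 2 * ∫ θ in (0:ℝ)..Real.pi, H θ := by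
    rw [show (2 * Real.pi) = Real.pi + Real.pi by ring,
      ← intervalIntegral.integral_add_adjacent_intervals (hHcont.intervalIntegrable 0 Real.pi)
        (hHcont.intervalIntegrable Real.pi (Real.pi + Real.pi))]
    have := hperH.intervalIntegral_add_eq Real.pi 0
    rw [zero_add] at this
    rw [this]; ring
  -- step 3 : symmetry about π/2
  have step3 : (∫ θ in (0:ℝ)..Real.pi, H θ) = 2 * ∫ θ in (0:ℝ)..(Real.pi / 2), H θ := by
    have hsplit := intervalIntegral.integral_add_adjacent_intervals (μ := volume)
      (hHcont.intervalIntegrable 0 (Real.pi / 2))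
      (hHcont.intervalIntegrable (Real.pi / 2) Real.pi)
    have hsym : (∫ θ in (Real.pi / 2)..Real.pi, H θ) = ∫ θ in (0:ℝ)..(Real.pi / 2), H θ := by
      have h1 : (∫ θ in (0:ℝ)..(Real.pi / 2), H (Real.pi - θ))
          = ∫ θ in (Real.pi / 2)..Real.pi, H θ := by
        rw [intervalIntegral.integral_comp_sub_left H Real.pi]
        congr 1 <;> ring
      rw [← h1]
      congr 1 with x
      simp [hH, Real.sin_pi_sub]
    rw [← hsplit, hsym]; ring
  -- step 4 : Jordan
  have step4 : (∫ θ in (0:ℝ)..(Real.pi / 2), H θ)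
      ≤ ∫ θ in (0:ℝ)..(Real.pi / 2), (k ^ 2 * (2 / Real.pi * θ) ^ 2 + 1) ^ (-ρ / 2) := by
    refine intervalIntegral.integral_mono_on (by linarith [Real.pi_pos])
      (hHcont.intervalIntegrable _ _) (hGcont.intervalIntegrable _ _) fun x hx => ?_
    have hs := Real.mul_le_sin hx.1 hx.2
    have h0 : (0:ℝ) ≤ 2 / Real.pi * x := mul_nonneg (by positivity) hx.1
    have hsq : (2 / Real.pi * x) ^ 2 ≤ Real.sin x ^ 2 := by nlinarith
    have hbase : (0:ℝ) < k ^ 2 * (2 / Real.pi * x) ^ 2 + 1 := by positivity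
    have hle : k ^ 2 * (2 / Real.pi * x) ^ 2 + 1 ≤ k ^ 2 * Real.sin x ^ 2 + 1 := by
      nlinarith [sq_nonneg k]
    exact Real.rpow_le_rpow_of_nonpos hbase hle hexp
  -- step 5 : substitution
  have step5 : (∫ θ in (0:ℝ)..(Real.pi / 2), (k ^ 2 * (2 / Real.pi * θ) ^ 2 + 1) ^ (-ρ / 2))
      = (Real.pi / 2) * ∫ t in (0:ℝ)..1, (k ^ 2 * t ^ 2 + 1) ^ (-ρ / 2) := by
    have hc : (2 / Real.pi : ℝ) ≠ 0 := by positivity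
    rw [intervalIntegral.integral_comp_mul_left
      (fun t => (k ^ 2 * t ^ 2 + 1) ^ (-ρ / 2)) hc, smul_eq_mul, mul_zero,
      show 2 / Real.pi * (Real.pi / 2) = 1 by field_simp, inv_div]
  have hπ : (0:ℝ) < Real.pi := Real.pi_pos
  calc (∫ θ in (0:ℝ)..(2 * Real.pi),
        ((k * Real.cos θ - r) ^ 2 + k ^ 2 * Real.sin θ ^ 2 + 1) ^ (-ρ / 2))
      ≤ ∫ θ in (0:ℝ)..(2 * Real.pi), H θ := step1
    _ = 4 * ∫ θ in (0:ℝ)..(Real.pi / 2), H θ := by rw [step2, step3]; ring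
    _ ≤ 4 * ∫ θ in (0:ℝ)..(Real.pi / 2), (k ^ 2 * (2 / Real.pi * θ) ^ 2 + 1) ^ (-ρ / 2) := by
        linarith [step4]
    _ = 2 * Real.pi * ∫ t in (0:ℝ)..1, (k ^ 2 * t ^ 2 + 1) ^ (-ρ / 2) := by
        rw [step5]; ring

lemma japConv_eq (ρ k : ℝ) (z : ℝ × ℝ) :
    japConv ρ k z = (1 / (2 * Real.pi)) * ∫ θ in (0:ℝ)..(2 * Real.pi),
      ((k * Real.cos θ - Real.sqrt (z.1 ^ 2 + z.2 ^ 2)) ^ 2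
        + k ^ 2 * Real.sin θ ^ 2 + 1) ^ (-ρ / 2) := by
  set r := Real.sqrt (z.1 ^ 2 + z.2 ^ 2) with hr
  set w : ℂ := ⟨z.1, z.2⟩ with hw
  have habs : ‖w‖ = r := by
    rw [Complex.norm_def, Complex.normSq_mk, hr]
    ring_nf
  set φ := w.arg with hφ
  have h1 : z.1 = r * Real.cos φ := by
    rw [← habs, hφ, Complex.norm_mul_cos_arg w]
  have h2 : z.2 = r * Real.sin φ := by
    rw [← habs, hφ, Complex.norm_mul_sin_arg w]
  set G : ℝ → ℝ := fun θ => ((k * Real.cos θ - r) ^ 2 + k ^ 2 * Real.sin θ ^ 2 + 1) ^ (-ρ / 2)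
    with hG
  have hper : Function.Periodic G (2 * Real.pi) := by
    intro x; simp [hG, Real.cos_add_two_pi, Real.sin_add_two_pi]
  have key : ∀ θ : ℝ, (1 + (z.1 - k * Real.cos θ) ^ 2 + (z.2 - k * Real.sin θ) ^ 2) ^ (-ρ / 2)
      = G (θ - φ) := by
    intro θ
    rw [hG]
    simp only
    congr 1
    rw [h1, h2, Real.cos_sub, Real.sin_sub]
    have hp := Real.sin_sq_add_cos_sq φ
    linear_combination (r ^ 2 - k ^ 2 * (Real.sin θ ^ 2 + Real.cos θ ^ 2)) * hp
  unfold japConv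
  congr 1
  simp_rw [key]
  rw [intervalIntegral.integral_comp_sub_right G φ, zero_sub]
  rw [show 2 * Real.pi - φ = -φ + 2 * Real.pi by ring]
  exact hper.intervalIntegral_add_eq (-φ) 0 |>.trans (by rw [zero_add])

lemma B_le (ρ : ℝ) (hρ : 0 < ρ) (k : ℝ) (hk : 2 ≤ k) :
    (∫ t in (0:ℝ)..1, (k ^ 2 * t ^ 2 + 1) ^ (-ρ / 2))
      ≤ 1 / k + k ^ (-ρ) * ∫ t in (1/k : ℝ)..1, t ^ (-ρ) := by
  have hk0 : (0:ℝ) < k := by linarith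
  have hik : (0:ℝ) < 1 / k := by positivity
  have hik1 : (1:ℝ) / k ≤ 1 := by
    rw [div_le_one hk0]; linarith
  have hgc : Continuous fun t : ℝ => (k ^ 2 * t ^ 2 + 1) ^ (-ρ / 2) :=
    cont_aux (by continuity) (fun x => by positivity) _
  have hnot : (0:ℝ) ∉ Set.uIcc (1/k) 1 := by
    rw [Set.uIcc_of_le hik1]
    exact fun h => absurd h.1 (by linarith)
  have hint2 : IntervalIntegrable (fun t : ℝ => t ^ (-ρ)) volume (1/k) 1 :=
    intervalIntegral.intervalIntegrable_rpow (Or.inr hnot)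
  have hsplit := intervalIntegral.integral_add_adjacent_intervals (μ := volume)
    (hgc.intervalIntegrable 0 (1/k)) (hgc.intervalIntegrable (1/k) 1)
  rw [← hsplit]
  have h1 : (∫ t in (0:ℝ)..(1/k), (k ^ 2 * t ^ 2 + 1) ^ (-ρ / 2)) ≤ 1 / k := by
    have : (∫ t in (0:ℝ)..(1/k), (k ^ 2 * t ^ 2 + 1) ^ (-ρ / 2))
        ≤ ∫ _t in (0:ℝ)..(1/k), (1:ℝ) := by
      refine intervalIntegral.integral_mono_on hik.le (hgc.intervalIntegrable _ _)
        intervalIntegrable_const fun x _ => ?_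
      exact Real.rpow_le_one_of_one_le_of_nonpos (by nlinarith [sq_nonneg (k*x)])
        (by linarith)
    simpa using this
  have h2 : (∫ t in (1/k : ℝ)..1, (k ^ 2 * t ^ 2 + 1) ^ (-ρ / 2))
      ≤ k ^ (-ρ) * ∫ t in (1/k : ℝ)..1, t ^ (-ρ) := by
    rw [← intervalIntegral.integral_const_mul]
    refine intervalIntegral.integral_mono_on hik1 (hgc.intervalIntegrable _ _)
      (hint2.const_mul _) fun x hx => ?_
    have hx0 : 0 < x := lt_of_lt_of_le hik hx.1
    have hkx : 0 < k * x := by positivity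
    have e1 : k ^ (-ρ) * x ^ (-ρ) = ((k * x) ^ 2) ^ (-ρ / 2) := by
      rw [← Real.mul_rpow hk0.le hx0.le, ← Real.rpow_natCast (k * x) 2,
        ← Real.rpow_mul hkx.le]
      norm_num
      congr 1
      ring
    rw [e1]
    refine Real.rpow_le_rpow_of_nonpos (by positivity) (by nlinarith) (by linarith)
  linarith

lemma uIcc_not (k : ℝ) (hk : 2 ≤ k) : (0:ℝ) ∉ Set.uIcc (1/k) 1 := by
  have hk0 : (0:ℝ) < k := by linarith
  have hik : (0:ℝ) < 1 / k := by positivity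
  have hik1 : (1:ℝ) / k ≤ 1 := by rw [div_le_one hk0]; linarith
  rw [Set.uIcc_of_le hik1]
  exact fun h => absurd h.1 (by linarith)

lemma caseA (ρ k : ℝ) (hρ : 0 < ρ) (hρ1 : ρ < 1) (hk : 2 ≤ k) :
    (∫ t in (0:ℝ)..1, (k ^ 2 * t ^ 2 + 1) ^ (-ρ / 2)) ≤ (1 + 1/(1-ρ)) * k ^ (-ρ) := by
  have hk0 : (0:ℝ) < k := by linarith
  have hI := B_le ρ hρ k hk
  have hval : (∫ t in (1/k : ℝ)..1, t ^ (-ρ)) ≤ 1/(1-ρ) := by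
    rw [integral_rpow (Or.inl (by linarith)), Real.one_rpow]
    have h1 : (0:ℝ) ≤ (1/k) ^ (-ρ+1) := Real.rpow_nonneg (by positivity) _
    have h2 : (0:ℝ) < -ρ+1 := by linarith
    rw [show (1:ℝ)-ρ = -ρ+1 by ring]
    gcongr
    linarith
  have hik : 1/k ≤ k ^ (-ρ) := by
    rw [one_div, ← Real.rpow_neg_one k]
    exact Real.rpow_le_rpow_of_exponent_le (by linarith) (by linarith)
  have hkρ : (0:ℝ) ≤ k ^ (-ρ) := Real.rpow_nonneg hk0.le _
  calc (∫ t in (0:ℝ)..1, (k ^ 2 * t ^ 2 + 1) ^ (-ρ / 2))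
      ≤ 1/k + k ^ (-ρ) * ∫ t in (1/k : ℝ)..1, t ^ (-ρ) := hI
    _ ≤ k ^ (-ρ) + k ^ (-ρ) * (1/(1-ρ)) := by
        have := mul_le_mul_of_nonneg_left hval hkρ
        linarith
    _ = (1 + 1/(1-ρ)) * k ^ (-ρ) := by ring

lemma caseB (k : ℝ) (hk : 2 ≤ k) (hke : Real.exp 1 ≤ k) :
    (∫ t in (0:ℝ)..1, (k ^ 2 * t ^ 2 + 1) ^ (-(1:ℝ) / 2)) ≤ 2 * (k⁻¹ * Real.log k) := by
  have hk0 : (0:ℝ) < k := by linarith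
  have hI := B_le 1 one_pos k hk
  have hval : (∫ t in (1/k : ℝ)..1, t ^ (-(1:ℝ))) = Real.log k := by
    have : (∫ t in (1/k : ℝ)..1, t ^ (-(1:ℝ))) = ∫ t in (1/k : ℝ)..1, t⁻¹ := by
      congr 1 with t; exact Real.rpow_neg_one t
    rw [this, integral_inv (uIcc_not k hk), one_div_one_div]
  have hlog : 1 ≤ Real.log k := by
    rw [Real.le_log_iff_exp_le hk0]
    simpa using hke
  have hinv : k ^ (-(1:ℝ)) = k⁻¹ := Real.rpow_neg_one k
  rw [hval, hinv] at hI
  have h1 : (0:ℝ) < k⁻¹ := by positivity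
  calc (∫ t in (0:ℝ)..1, (k ^ 2 * t ^ 2 + 1) ^ (-(1:ℝ) / 2))
      ≤ 1/k + k⁻¹ * Real.log k := hI
    _ ≤ 2 * (k⁻¹ * Real.log k) := by
        rw [one_div]
        nlinarith
  
lemma caseC (ρ k : ℝ) (hρ1 : 1 < ρ) (hk : 2 ≤ k) :
    (∫ t in (0:ℝ)..1, (k ^ 2 * t ^ 2 + 1) ^ (-ρ / 2)) ≤ (1 + 1/(ρ-1)) * k⁻¹ := by
  have hk0 : (0:ℝ) < k := by linarith
  have hI := B_le ρ (by linarith) k hk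
  have hpow : ((1:ℝ)/k) ^ (-ρ+1) = k ^ (ρ-1) := by
    rw [one_div, Real.inv_rpow hk0.le, ← Real.rpow_neg hk0.le]
    congr 1; ring
  have hkρ : (0:ℝ) ≤ k ^ (-ρ) := Real.rpow_nonneg hk0.le _
  have hI2 : (∫ t in (1/k : ℝ)..1, t ^ (-ρ)) ≤ k ^ (ρ-1) / (ρ-1) := by
    rw [integral_rpow (Or.inr ⟨by intro h; apply_fun (-·) at h; simp at h; linarith,
      uIcc_not k hk⟩), Real.one_rpow, hpow,
      show (-ρ+1:ℝ) = -(ρ-1) by ring, div_neg, ← neg_div]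
    gcongr
    · linarith
  have hmul : k ^ (-ρ) * k ^ (ρ-1) = k⁻¹ := by
    rw [← Real.rpow_add hk0, show -ρ+(ρ-1) = (-1:ℝ) by ring, Real.rpow_neg_one]
  calc (∫ t in (0:ℝ)..1, (k ^ 2 * t ^ 2 + 1) ^ (-ρ / 2))
      ≤ 1/k + k ^ (-ρ) * ∫ t in (1/k : ℝ)..1, t ^ (-ρ) := hI
    _ ≤ 1/k + k ^ (-ρ) * (k ^ (ρ-1) / (ρ-1)) := by
        have := mul_le_mul_of_nonneg_left hI2 hkρ
        linarith
    _ = 1/k + k⁻¹/(ρ-1) := by rw [← mul_div_assoc, hmul]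
    _ = (1 + 1/(ρ-1)) * k⁻¹ := by rw [one_div]; ring


lemma japConv_le (ρ : ℝ) (hρ : 0 < ρ) (k : ℝ) (z : ℝ × ℝ) :
    japConv ρ k z ≤ ∫ t in (0:ℝ)..1, (k ^ 2 * t ^ 2 + 1) ^ (-ρ / 2) := by
  rw [japConv_eq]
  have h := ring_int_le ρ hρ k (Real.sqrt (z.1 ^ 2 + z.2 ^ 2))
  have hπ : (0:ℝ) < 1 / (2 * Real.pi) := by positivity
  calc (1 / (2 * Real.pi)) * ∫ θ in (0:ℝ)..(2 * Real.pi),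
        ((k * Real.cos θ - Real.sqrt (z.1 ^ 2 + z.2 ^ 2)) ^ 2
          + k ^ 2 * Real.sin θ ^ 2 + 1) ^ (-ρ / 2)
      ≤ (1 / (2 * Real.pi)) * (2 * Real.pi * ∫ t in (0:ℝ)..1, (k ^ 2 * t ^ 2 + 1) ^ (-ρ / 2)) :=
        mul_le_mul_of_nonneg_left h hπ.le
    _ = ∫ t in (0:ℝ)..1, (k ^ 2 * t ^ 2 + 1) ^ (-ρ / 2) := by
        rw [← mul_assoc, one_div, inv_mul_cancel₀ (by positivity), one_mul]

lemma japConv_nonneg (ρ k : ℝ) (z : ℝ × ℝ) : 0 ≤ japConv ρ k z := by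
  unfold japConv
  have h2π : (0:ℝ) ≤ 2 * Real.pi := by positivity
  refine mul_nonneg (by positivity) (intervalIntegral.integral_nonneg h2π fun x _ => ?_)
  positivity

lemma japSup_le (ρ : ℝ) (hρ : 0 < ρ) (k : ℝ) {C : ℝ} (hC : 0 ≤ C)
    (hB : (∫ t in (0:ℝ)..1, (k ^ 2 * t ^ 2 + 1) ^ (-ρ / 2)) ≤ C) :
    (⨆ z : ℝ × ℝ, japConv ρ k z) ≤ C ∧ 0 ≤ ⨆ z : ℝ × ℝ, japConv ρ k z := by
  have hub : ∀ z : ℝ × ℝ, japConv ρ k z ≤ C := fun z => (japConv_le ρ hρ k z).trans hB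
  have hbdd : BddAbove (Set.range fun z : ℝ × ℝ => japConv ρ k z) := by
    refine ⟨C, ?_⟩
    rintro y ⟨z, rfl⟩
    exact hub z
  exact ⟨ciSup_le hub, le_trans (japConv_nonneg ρ k (0, 0)) (le_ciSup hbdd (0, 0))⟩

/-- explicit formula, pointwise bound by `∫₀¹ (k²t²+1)^{-ρ/2}dt`, and the
resulting asymptotic bounds for `sup_z (⟨·⟩^{-ρ} * δ_k)(z)` as `k → ∞`. -/
theorem japConv_formula_and_bound (ρ : ℝ) (hρ : 0 < ρ) :
    (∀ k : ℝ, 2 ≤ k → ∀ z : ℝ × ℝ,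
      japConv ρ k z = (1 / (2 * Real.pi)) * ∫ θ in (0:ℝ)..(2 * Real.pi),
        ((k * Real.cos θ - Real.sqrt (z.1 ^ 2 + z.2 ^ 2)) ^ 2
          + k ^ 2 * Real.sin θ ^ 2 + 1) ^ (-ρ / 2)) ∧
    (∀ k : ℝ, 2 ≤ k → ∀ z : ℝ × ℝ,
      japConv ρ k z ≤ ∫ t in (0:ℝ)..1, (k ^ 2 * t ^ 2 + 1) ^ (-ρ / 2)) ∧
    (ρ < 1 → (fun k : ℝ => ⨆ z : ℝ × ℝ, japConv ρ k z) =O[atTop] fun k => k ^ (-ρ)) ∧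
    (ρ = 1 → (fun k : ℝ => ⨆ z : ℝ × ℝ, japConv ρ k z) =O[atTop] fun k => k⁻¹ * Real.log k) ∧
    (1 < ρ → (fun k : ℝ => ⨆ z : ℝ × ℝ, japConv ρ k z) =O[atTop] fun k => k⁻¹) := by
  refine ⟨fun k _ z => japConv_eq ρ k z, fun k _ z => japConv_le ρ hρ k z, ?_, ?_, ?_⟩
  · intro hρ1
    rw [Asymptotics.isBigO_iff]
    refine ⟨1 + 1/(1-ρ), ?_⟩
    filter_upwards [eventually_ge_atTop (2:ℝ)] with k hk
    have hk0 : (0:ℝ) < k := by linarith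
    have hC : (0:ℝ) ≤ 1 + 1/(1-ρ) := by
      have : (0:ℝ) < 1 - ρ := by linarith
      positivity
    obtain ⟨h1, h2⟩ := japSup_le ρ hρ k (mul_nonneg hC (Real.rpow_nonneg hk0.le _))
      ((caseA ρ k hρ hρ1 hk))
    rw [Real.norm_eq_abs, Real.norm_eq_abs, abs_of_nonneg h2,
      abs_of_nonneg (Real.rpow_nonneg hk0.le _)]
    exact h1
  · intro hρ1
    subst hρ1
    rw [Asymptotics.isBigO_iff]
    refine ⟨2, ?_⟩
    filter_upwards [eventually_ge_atTop (3:ℝ)] with k hk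
    have hk2 : (2:ℝ) ≤ k := by linarith
    have hk0 : (0:ℝ) < k := by linarith
    have hke : Real.exp 1 ≤ k := by
      have := Real.exp_one_lt_d9
      linarith
    have hlog : (0:ℝ) ≤ Real.log k := Real.log_nonneg (by linarith)
    have hrhs : (0:ℝ) ≤ k⁻¹ * Real.log k := by positivity
    obtain ⟨h1, h2⟩ := japSup_le 1 one_pos k (by positivity) (caseB k hk2 hke)
    rw [Real.norm_eq_abs, Real.norm_eq_abs, abs_of_nonneg h2, abs_of_nonneg hrhs]
    exact h1
  · intro hρ1
    rw [Asymptotics.isBigO_iff]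
    refine ⟨1 + 1/(ρ-1), ?_⟩
    filter_upwards [eventually_ge_atTop (2:ℝ)] with k hk
    have hk0 : (0:ℝ) < k := by linarith
    have hC : (0:ℝ) ≤ 1 + 1/(ρ-1) := by
      have : (0:ℝ) < ρ - 1 := by linarith
      positivity
    obtain ⟨h1, h2⟩ := japSup_le ρ hρ k (mul_nonneg hC (by positivity)) (caseC ρ k hρ1 hk)
    rw [Real.norm_eq_abs, Real.norm_eq_abs, abs_of_nonneg h2, abs_of_nonneg (by positivity)]
    exact h1
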